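/- Let G be a k×k symmetric-matrix-valued homogeneous polynomial of even degree 2n in d variables, and let ℓ ≥ n. Then G is ℓ-sos on S^{d−1} if and only if the matrix polynomial y ↦ ‖y‖^{2(ℓ−n)}·G(y) is a sum of squares, i.e. there exist finitely many k×k matrix-valued polynomials V_1, …, V_m such that ‖y‖^{2(ℓ−n)}·G(y) = Σ_j V_j(y) V_j(y)^T for all y ∈ ℝ^d. -/

import Mathlib

open Matrix

open Matrix MvPolynomial Finset

namespace Stmt19Aux

lemma eval_smul_homog {σ : Type*} [Fintype σ] {p : MvPolynomial σ ℝ} {t : ℕ}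
    (hp : p.IsHomogeneous t) (c : ℝ) (x : σ → ℝ) :
    eval (fun i => c * x i) p = c ^ t * eval x p := by
  rw [eval_eq', eval_eq', Finset.mul_sum]
  refine Finset.sum_congr rfl fun μ hμ => ?_
  have hdegd : μ.degree = t := by
    by_contra h
    exact (MvPolynomial.mem_support_iff.mp hμ) (hp.coeff_eq_zero h)
  have hdeg : (∑ i, μ i) = t := by
    rw [← hdegd, Finsupp.degree]
    exact (Finset.sum_subset (Finset.subset_univ _)
      (fun i _ hi => by simpa using Finsupp.notMem_support_iff.mp hi)).symm
  calc coeff μ p * ∏ i, (c * x i) ^ μ i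
      = coeff μ p * ((∏ i, c ^ μ i) * ∏ i, x i ^ μ i) := by
        rw [← Finset.prod_mul_distrib]
        simp [mul_pow]
    _ = c ^ t * (coeff μ p * ∏ i, x i ^ μ i) := by
        rw [Finset.prod_pow_eq_pow_sum, hdeg]; ring

lemma continuous_eval {d : ℕ} (p : MvPolynomial (Fin d) ℝ) :
    Continuous fun y : Fin d → ℝ => eval y p := by
  induction p using MvPolynomial.induction_on with
  | C a => simpa using continuous_const
  | add p q hp hq => simpa [Pi.add_def] using hp.add hq
  | mul_X p i hp => simpa [Pi.mul_def] using hp.mul (continuous_apply i)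

lemma eq_zero_of_sum_sq {d : ℕ} {ι : Type*} [Fintype ι] (f : ι → MvPolynomial (Fin d) ℝ)
    (h : ∑ i, f i ^ 2 = 0) (i : ι) : f i = 0 := by
  apply MvPolynomial.funext
  intro x
  have h2 : ∑ j, (eval x (f j)) ^ 2 = 0 := by
    have := congrArg (eval x) h
    simpa [map_sum] using this
  have h3 := (Finset.sum_eq_zero_iff_of_nonneg (fun j _ => sq_nonneg _)).mp h2 i (mem_univ i)
  have : eval x (f i) = 0 := by
    exact pow_eq_zero_iff two_ne_zero |>.mp h3
  simpa using this

lemma hc_totalDegree_ne_zero {d : ℕ} {p : MvPolynomial (Fin d) ℝ} (hp : p ≠ 0) :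
    homogeneousComponent p.totalDegree p ≠ 0 := by
  obtain ⟨μ, hμ, hdeg⟩ := Finset.exists_mem_eq_sup p.support
    (MvPolynomial.support_nonempty.mpr hp) (fun s => s.sum fun _ e => e)
  intro h
  have hco := coeff_homogeneousComponent (n := p.totalDegree) μ (φ := p)
  have hd : μ.degree = p.totalDegree := by
    rw [MvPolynomial.totalDegree, hdeg]; rfl
  rw [h, if_pos hd] at hco
  exact (MvPolynomial.mem_support_iff.mp hμ) hco.symm

lemma totalDegree_sub_hc_lt {d : ℕ} {p : MvPolynomial (Fin d) ℝ} {D : ℕ} (hD : 0 < D)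
    (hp : p.totalDegree ≤ D) :
    (p - homogeneousComponent D p).totalDegree < D := by
  rw [MvPolynomial.totalDegree]
  rw [Finset.sup_lt_iff (by simpa using hD)]
  intro μ hμ
  have hco : coeff μ (p - homogeneousComponent D p) ≠ 0 := MvPolynomial.mem_support_iff.mp hμ
  rw [coeff_sub, coeff_homogeneousComponent] at hco
  by_cases h : μ.degree = D
  · simp [h] at hco
  · have hcp : coeff μ p ≠ 0 := by simpa [h] using hco
    have hle : (μ.sum fun _ e => e) ≤ D :=
      le_trans (le_totalDegree (MvPolynomial.mem_support_iff.mpr hcp)) hp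
    have hde : (μ.sum fun _ e => e) = μ.degree := rfl
    omega

lemma hc_mul_top {d : ℕ} {p q : MvPolynomial (Fin d) ℝ} {D : ℕ} (hD : 0 < D)
    (hp : p.totalDegree ≤ D) (hq : q.totalDegree ≤ D) :
    homogeneousComponent (D + D) (p * q) =
      homogeneousComponent D p * homogeneousComponent D q := by
  set p1 := homogeneousComponent D p with hp1def
  set q1 := homogeneousComponent D q with hq1def
  have hp1 : p1.IsHomogeneous D := homogeneousComponent_isHomogeneous D p
  have hq1 : q1.IsHomogeneous D := homogeneousComponent_isHomogeneous D q
  have key : p * q = p1 * q1 + ((p - p1) * q + p1 * (q - q1)) := by ring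
  rw [key, map_add, map_add]
  have h1 : homogeneousComponent (D + D) (p1 * q1) = p1 * q1 := by
    have hmem : p1 * q1 ∈ homogeneousSubmodule (Fin d) ℝ (D + D) :=
      (mem_homogeneousSubmodule _ _).mpr (hp1.mul hq1)
    rw [homogeneousComponent_of_mem hmem, if_pos rfl]
  have h2 : homogeneousComponent (D + D) ((p - p1) * q) = 0 := by
    apply homogeneousComponent_eq_zero
    calc ((p - p1) * q).totalDegree ≤ (p - p1).totalDegree + q.totalDegree :=
          totalDegree_mul _ _
      _ < D + D := by
          have h4 := totalDegree_sub_hc_lt hD hp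
          rw [← hp1def] at h4
          omega
  have h3 : homogeneousComponent (D + D) (p1 * (q - q1)) = 0 := by
    apply homogeneousComponent_eq_zero
    calc (p1 * (q - q1)).totalDegree ≤ p1.totalDegree + (q - q1).totalDegree :=
          totalDegree_mul _ _
      _ < D + D := by
          have h4 := totalDegree_sub_hc_lt hD hq
          rw [← hq1def] at h4
          have h5 := hp1.totalDegree_le
          omega
  rw [h1, h2, h3]
  ring

lemma neg_one_pow_mod (i : ℕ) : ((-1 : ℝ)) ^ i = (-1) ^ (i % 2) := by
  conv_lhs => rw [← Nat.div_add_mod i 2]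
  rw [pow_add, pow_mul]
  norm_num

lemma matrix_entry_form {k : ℕ} {κ : Type*} [Fintype κ] (M : Matrix (Fin k) (Fin k) ℝ)
    (A : κ → Matrix (Fin k) (Fin k) ℝ) :
    M = ∑ j, A j * (A j)ᵀ ↔ ∀ a c, M a c = ∑ j, ∑ b, A j a b * A j c b := by
  rw [← Matrix.ext_iff]
  refine forall_congr' fun a => forall_congr' fun c => ?_
  simp [Matrix.sum_apply, Matrix.mul_apply]

lemma neg_one_pow_of_eq_mod {i j : ℕ} (h : i % 2 = j % 2) : ((-1 : ℝ)) ^ i = (-1) ^ j := by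
  rw [neg_one_pow_mod i, neg_one_pow_mod j, h]

lemma neg_one_pow_of_ne_mod {i j : ℕ} (h : i % 2 ≠ j % 2) : ((-1 : ℝ)) ^ i = -((-1) ^ j) := by
  rw [neg_one_pow_mod i, neg_one_pow_mod j]
  rcases Nat.mod_two_eq_zero_or_one i with hi | hi <;>
    rcases Nat.mod_two_eq_zero_or_one j with hj | hj <;>
      simp [hi, hj] at h ⊢

lemma neg_one_pow_mul_self (ℓ : ℕ) : ((-1 : ℝ)) ^ ℓ * (-1) ^ ℓ = 1 := by
  rw [← pow_add]
  exact Even.neg_one_pow ⟨ℓ, rfl⟩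

end Stmt19Aux

section Stmt19Main
open MvPolynomial Finset

lemma stmt19_forward {d k n ℓ : ℕ} (hd : 0 < d) (hk : 0 < k) (hℓ : n ≤ ℓ)
    (G : Matrix (Fin k) (Fin k) (MvPolynomial (Fin d) ℝ))
    (hGhom : ∀ a b, (G a b).IsHomogeneous (2 * n)) (hGsym : Gᵀ = G) :
    (∃ (m : ℕ) (U : Fin m → Matrix (Fin k) (Fin k) (MvPolynomial (Fin d) ℝ)),
    (∀ j a b, ((U j) a b).totalDegree ≤ ℓ) ∧
    ∀ x : Fin d → ℝ, (∑ i, x i ^ 2) = 1 →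
      G.map (MvPolynomial.eval x)
        = ∑ j, (U j).map (MvPolynomial.eval x) * ((U j).map (MvPolynomial.eval x))ᵀ) →
    (∃ (m : ℕ) (V : Fin m → Matrix (Fin k) (Fin k) (MvPolynomial (Fin d) ℝ)),
      ∀ y : Fin d → ℝ,
        ((∑ i, y i ^ 2) ^ (ℓ - n)) • (G.map (MvPolynomial.eval y))
          = ∑ j, (V j).map (MvPolynomial.eval y) * ((V j).map (MvPolynomial.eval y))ᵀ) := by
  classical
  set sq : MvPolynomial (Fin d) ℝ := ∑ i, X i ^ 2 with hsq
  have hsqhom : sq.IsHomogeneous 2 :=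
    IsHomogeneous.sum _ _ _ fun i _ => by simpa using (isHomogeneous_X ℝ i).pow 2
  have hsqeval : ∀ y : Fin d → ℝ, eval y sq = ∑ i, y i ^ 2 := fun y => by simp [hsq]
  rintro ⟨m, U, hdeg, hU⟩
  set SE : Finset ℕ := (range (ℓ + 1)).filter (fun i => i % 2 = ℓ % 2) with hSE
  set SO : Finset ℕ := (range (ℓ + 1)).filter (fun i => ¬i % 2 = ℓ % 2) with hSO
  set E : Fin m → Fin k → Fin k → MvPolynomial (Fin d) ℝ := fun j a b =>
    ∑ i ∈ SE, sq ^ ((ℓ - i) / 2) * homogeneousComponent i (U j a b) with hE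
  set O : Fin m → Fin k → Fin k → MvPolynomial (Fin d) ℝ := fun j a b =>
    ∑ i ∈ SO, sq ^ ((ℓ - 1 - i) / 2) * homogeneousComponent i (U j a b) with hO
  set P : Fin k → Fin k → MvPolynomial (Fin d) ℝ := fun a c => sq ^ (ℓ - n) * G a c with hP
  set Q : Fin k → Fin k → MvPolynomial (Fin d) ℝ := fun a c =>
    (∑ j, ∑ b, E j a b * E j c b) +
      ∑ p : Fin m × Fin d, ∑ b, (X p.2 * O p.1 a b) * (X p.2 * O p.1 c b) with hQ
  have hrange : ∀ j a b, ∑ i ∈ range (ℓ + 1), homogeneousComponent i (U j a b) = U j a b := by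
    intro j a b
    have h1 := sum_homogeneousComponent (U j a b)
    calc ∑ i ∈ range (ℓ + 1), homogeneousComponent i (U j a b)
        = ∑ i ∈ range ((U j a b).totalDegree + 1), homogeneousComponent i (U j a b) := by
          refine (Finset.sum_subset (Finset.range_subset_range.mpr ?_) ?_).symm
          · have := hdeg j a b; omega
          · intro i _ hi
            apply homogeneousComponent_eq_zero
            simp only [mem_range, not_lt] at hi
            omega
      _ = U j a b := h1
  -- The key pointwise identity, proved by density.
  have key : ∀ (a c : Fin k) (y : Fin d → ℝ), eval y (P a c) = eval y (Q a c) := by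
    intro a c
    haveI : Nonempty (Fin d) := ⟨⟨0, hd⟩⟩
    haveI : Nontrivial (Fin d → ℝ) := inferInstance
    haveI : Filter.NeBot (nhdsWithin (0 : Fin d → ℝ) {(0 : Fin d → ℝ)}ᶜ) :=
      Module.punctured_nhds_neBot ℝ (Fin d → ℝ) 0
    have hdense : Dense ({(0 : Fin d → ℝ)}ᶜ : Set (Fin d → ℝ)) := dense_compl_singleton _
    have heqon : Set.EqOn (fun y : Fin d → ℝ => eval y (P a c))
        (fun y : Fin d → ℝ => eval y (Q a c)) ({(0 : Fin d → ℝ)}ᶜ : Set (Fin d → ℝ)) := by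
      intro y hy
      simp only [Set.mem_compl_iff, Set.mem_singleton_iff] at hy
      -- setup
      have hs : (0 : ℝ) < ∑ i, y i ^ 2 := by
        obtain ⟨i, hi⟩ : ∃ i, y i ≠ 0 := by
          by_contra hcon; push_neg at hcon; exact hy (funext hcon)
        exact Finset.sum_pos' (fun i _ => sq_nonneg _) ⟨i, mem_univ i, by positivity⟩
      set s : ℝ := ∑ i, y i ^ 2 with hsdef
      set r : ℝ := Real.sqrt s with hrdef
      have hr : 0 < r := Real.sqrt_pos.mpr hs
      have hr2 : r ^ 2 = s := Real.sq_sqrt hs.le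
      set x : Fin d → ℝ := fun i => r⁻¹ * y i with hxdef
      have hyx : y = fun i => r * x i := by
        funext i; rw [hxdef]; field_simp
      have hx1 : (∑ i, x i ^ 2) = 1 := by
        rw [hxdef]
        simp only [mul_pow, ← Finset.mul_sum]
        rw [← hsdef, inv_pow, ← hr2]
        field_simp
      have hx1' : (∑ i, (-x i) ^ 2) = 1 := by simpa using hx1
      have hUx : ∀ a c, eval x (G a c) = ∑ j, ∑ b, eval x (U j a b) * eval x (U j c b) := by
        intro a c
        have h := Matrix.ext_iff.mpr (hU x hx1) a c
        simpa [Matrix.sum_apply, Matrix.mul_apply, Matrix.map_apply] using h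
      have hUnx : ∀ a c, eval (fun i => -x i) (G a c)
          = ∑ j, ∑ b, eval (fun i => -x i) (U j a b) * eval (fun i => -x i) (U j c b) := by
        intro a c
        have h := Matrix.ext_iff.mpr (hU (fun i => -x i) hx1') a c
        simpa [Matrix.sum_apply, Matrix.mul_apply, Matrix.map_apply] using h
      set A : Fin m → Fin k → Fin k → ℝ := fun j a b =>
        ∑ i ∈ SE, eval x (homogeneousComponent i (U j a b)) with hA
      set B : Fin m → Fin k → Fin k → ℝ := fun j a b =>
        ∑ i ∈ SO, eval x (homogeneousComponent i (U j a b)) with hB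
      have hU_split : ∀ j a b, eval x (U j a b) = A j a b + B j a b := by
        intro j a b
        conv_lhs => rw [← hrange j a b]
        rw [map_sum, hA, hB,
          ← Finset.sum_filter_add_sum_filter_not (range (ℓ + 1)) (fun i => i % 2 = ℓ % 2)]
      have hU_neg : ∀ j a b,
          eval (fun i => -x i) (U j a b) = (-1 : ℝ) ^ ℓ * (A j a b - B j a b) := by
        intro j a b
        conv_lhs => rw [← hrange j a b]
        rw [map_sum]
        have hterm : ∀ i, eval (fun i' => -x i') (homogeneousComponent i (U j a b))
            = (-1 : ℝ) ^ i * eval x (homogeneousComponent i (U j a b)) := by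
          intro i
          have h := Stmt19Aux.eval_smul_homog
            (homogeneousComponent_isHomogeneous i (U j a b)) (-1) x
          simpa [neg_one_mul] using h
        rw [← Finset.sum_filter_add_sum_filter_not (range (ℓ + 1)) (fun i => i % 2 = ℓ % 2),
          ← hSE, ← hSO]
        have h1 : ∑ i ∈ SE, eval (fun i' => -x i') (homogeneousComponent i (U j a b))
            = (-1 : ℝ) ^ ℓ * A j a b := by
          rw [hA, Finset.mul_sum]
          refine Finset.sum_congr rfl fun i hi => ?_
          rw [hterm i, Stmt19Aux.neg_one_pow_of_eq_mod (by
            simp only [hSE, mem_filter] at hi; exact hi.2)]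
        have h2 : ∑ i ∈ SO, eval (fun i' => -x i') (homogeneousComponent i (U j a b))
            = -((-1 : ℝ) ^ ℓ * B j a b) := by
          rw [hB, Finset.mul_sum, ← Finset.sum_neg_distrib]
          refine Finset.sum_congr rfl fun i hi => ?_
          rw [hterm i, Stmt19Aux.neg_one_pow_of_ne_mod (by
            simp only [hSO, mem_filter] at hi; exact hi.2)]
          ring
        rw [h1, h2]; ring
      have hGeven : ∀ a c, eval (fun i => -x i) (G a c) = eval x (G a c) := by
        intro a c
        have h := Stmt19Aux.eval_smul_homog (hGhom a c) (-1) x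
        have h2 : ((-1 : ℝ)) ^ (2 * n) = 1 := by
          rw [pow_mul]; norm_num
        simpa [neg_one_mul, h2] using h
      have hAB : ∀ a c, eval x (G a c)
          = ∑ j, ∑ b, (A j a b * A j c b + B j a b * B j c b) := by
        intro a c
        have h1 := hUx a c
        have h2 := hUnx a c
        rw [hGeven a c] at h2
        simp only [hU_split, hU_neg] at h1 h2
        have hs2 : ∑ j, ∑ b, ((-1 : ℝ) ^ ℓ * (A j a b - B j a b))
              * ((-1 : ℝ) ^ ℓ * (A j c b - B j c b))
            = ∑ j, ∑ b, (A j a b - B j a b) * (A j c b - B j c b) := by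
          refine Finset.sum_congr rfl fun j _ => Finset.sum_congr rfl fun b _ => ?_
          have h3 := Stmt19Aux.neg_one_pow_mul_self ℓ
          linear_combination ((A j a b - B j a b) * (A j c b - B j c b)) * h3
        rw [hs2] at h2
        have hcomb : (∑ j, ∑ b, (A j a b + B j a b) * (A j c b + B j c b))
              + (∑ j, ∑ b, (A j a b - B j a b) * (A j c b - B j c b))
            = 2 * ∑ j, ∑ b, (A j a b * A j c b + B j a b * B j c b) := by
          rw [Finset.mul_sum, ← Finset.sum_add_distrib]
          refine Finset.sum_congr rfl fun j _ => ?_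
          rw [Finset.mul_sum, ← Finset.sum_add_distrib]
          refine Finset.sum_congr rfl fun b _ => by ring
        linarith [h1, h2, hcomb]
      -- evaluations at y
      have hhcy : ∀ i (p : MvPolynomial (Fin d) ℝ),
          eval y (homogeneousComponent i p) = r ^ i * eval x (homogeneousComponent i p) := by
        intro i p
        conv_lhs => rw [hyx]
        exact Stmt19Aux.eval_smul_homog (homogeneousComponent_isHomogeneous i p) r x
      have hEy : ∀ j a b, eval y (E j a b) = r ^ ℓ * A j a b := by
        intro j a b
        simp only [hE, hA]
        simp only [map_sum, _root_.map_mul, map_pow, hsqeval, ← hsdef, Finset.mul_sum]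
        refine Finset.sum_congr rfl fun i hi => ?_
        have hiSE : i ≤ ℓ ∧ i % 2 = ℓ % 2 := by
          simp only [hSE, mem_filter, mem_range] at hi
          exact ⟨by omega, hi.2⟩
        rw [hhcy i]
        rw [← hr2, ← pow_mul]
        rw [show 2 * ((ℓ - i) / 2) = ℓ - i by omega]
        rw [← mul_assoc, ← pow_add, show ℓ - i + i = ℓ by omega]
      have hOy : ∀ j a b, eval y (O j a b) = r ^ (ℓ - 1) * B j a b := by
        intro j a b
        simp only [hO, hB]
        simp only [map_sum, _root_.map_mul, map_pow, hsqeval, ← hsdef, Finset.mul_sum]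
        refine Finset.sum_congr rfl fun i hi => ?_
        have hiSO : i ≤ ℓ ∧ i % 2 ≠ ℓ % 2 := by
          simp only [hSO, mem_filter, mem_range] at hi
          exact ⟨by omega, hi.2⟩
        rw [hhcy i]
        rw [← hr2, ← pow_mul]
        rw [show 2 * ((ℓ - 1 - i) / 2) = ℓ - 1 - i by omega]
        rw [← mul_assoc, ← pow_add, show ℓ - 1 - i + i = ℓ - 1 by omega]
      -- final identity
      show eval y (P a c) = eval y (Q a c)
      have hGy : eval y (G a c) = r ^ (2 * n) * eval x (G a c) := by
        conv_lhs => rw [hyx]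
        exact Stmt19Aux.eval_smul_homog (hGhom a c) r x
      have hPy : eval y (P a c) = r ^ (2 * ℓ) * eval x (G a c) := by
        simp only [hP]
        simp only [_root_.map_mul, map_pow, hsqeval, ← hsdef]
        rw [hGy, ← hr2, ← pow_mul, ← mul_assoc, ← pow_add,
          show 2 * (ℓ - n) + 2 * n = 2 * ℓ by omega]
      have hQy : eval y (Q a c)
          = r ^ (2 * ℓ) * (∑ j, ∑ b, A j a b * A j c b)
            + s * (r ^ (ℓ - 1) * r ^ (ℓ - 1)) * (∑ j, ∑ b, B j a b * B j c b) := by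
        simp only [hQ]
        simp only [map_add, map_sum, _root_.map_mul, eval_X, hEy, hOy]
        congr 1
        · rw [Finset.mul_sum]
          refine Finset.sum_congr rfl fun j _ => ?_
          rw [Finset.mul_sum]
          refine Finset.sum_congr rfl fun b _ => by
            rw [show 2 * ℓ = ℓ + ℓ by omega, pow_add]; ring
        · rw [Fintype.sum_prod_type]
          rw [Finset.mul_sum]
          refine Finset.sum_congr rfl fun j _ => ?_
          have : ∀ i : Fin d, ∑ b, (y i * (r ^ (ℓ - 1) * B j a b)) * (y i * (r ^ (ℓ - 1) * B j c b))
              = y i ^ 2 * ((r ^ (ℓ - 1) * r ^ (ℓ - 1)) * ∑ b, B j a b * B j c b) := by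
            intro i
            rw [Finset.mul_sum, Finset.mul_sum]
            exact Finset.sum_congr rfl fun b _ => by ring
          rw [Finset.sum_congr rfl fun i _ => this i, ← Finset.sum_mul, ← hsdef]
          ring
      rw [hPy, hQy, hAB a c]
      have hsplit : ∑ j, ∑ b, (A j a b * A j c b + B j a b * B j c b)
          = (∑ j, ∑ b, A j a b * A j c b) + ∑ j, ∑ b, B j a b * B j c b := by
        rw [← Finset.sum_add_distrib]
        exact Finset.sum_congr rfl fun j _ => Finset.sum_add_distrib
      rw [hsplit, mul_add]
      congr 1
      rcases Nat.eq_zero_or_pos ℓ with h0 | hpos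
      · have hSOempty : SO = ∅ := by
          rw [hSO, h0]
          ext i
          simp only [mem_filter, mem_range, Finset.notMem_empty, iff_false, not_and]
          omega
        have hB0 : ∀ j a b, B j a b = 0 := by
          intro j a b; rw [hB, hSOempty]; simp
        simp only [hB0, mul_zero, zero_mul, Finset.sum_const_zero]
      · have hpow : s * (r ^ (ℓ - 1) * r ^ (ℓ - 1)) = r ^ (2 * ℓ) := by
          rw [← hr2, ← pow_add, ← pow_add]
          congr 1
          omega
        rw [hpow]
    have h := Continuous.ext_on hdense (Stmt19Aux.continuous_eval (P a c))
      (Stmt19Aux.continuous_eval (Q a c)) heqon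
    exact fun y => congrFun h y
  -- assemble the witnesses
  set W : (Fin m ⊕ Fin m × Fin d) → Matrix (Fin k) (Fin k) (MvPolynomial (Fin d) ℝ) :=
    Sum.elim (fun j => Matrix.of fun a b => E j a b)
      (fun p => Matrix.of fun a b => X p.2 * O p.1 a b) with hW
  refine ⟨Fintype.card (Fin m ⊕ Fin m × Fin d),
    fun t => W ((Fintype.equivFin (Fin m ⊕ Fin m × Fin d)).symm t), ?_⟩
  intro y
  refine Eq.trans ?_ (Fintype.sum_equiv ((Fintype.equivFin (Fin m ⊕ Fin m × Fin d)).symm)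
    (fun t => (W ((Fintype.equivFin (Fin m ⊕ Fin m × Fin d)).symm t)).map (eval y)
      * ((W ((Fintype.equivFin (Fin m ⊕ Fin m × Fin d)).symm t)).map (eval y))ᵀ)
    (fun w => (W w).map (eval y) * ((W w).map (eval y))ᵀ) (fun t => rfl)).symm
  ext a c
  have hk2 := key a c y
  simp only [hP, hQ, map_add, map_sum, _root_.map_mul, map_pow, hsqeval, eval_X] at hk2
  simp only [Matrix.smul_apply, Matrix.map_apply, Matrix.sum_apply, Matrix.mul_apply,
    Matrix.transpose_apply, smul_eq_mul, Fintype.sum_sum_type, hW, Sum.elim_inl, Sum.elim_inr,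
    Matrix.of_apply, map_sum, _root_.map_mul, map_pow, eval_X, hsqeval]
  exact hk2

lemma stmt19_backward {d k n ℓ : ℕ} (hd : 0 < d) (hk : 0 < k) (hℓ : n ≤ ℓ)
    (G : Matrix (Fin k) (Fin k) (MvPolynomial (Fin d) ℝ))
    (hGhom : ∀ a b, (G a b).IsHomogeneous (2 * n)) :
    (∃ (m : ℕ) (V : Fin m → Matrix (Fin k) (Fin k) (MvPolynomial (Fin d) ℝ)),
      ∀ y : Fin d → ℝ,
        ((∑ i, y i ^ 2) ^ (ℓ - n)) • (G.map (MvPolynomial.eval y))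
          = ∑ j, (V j).map (MvPolynomial.eval y) * ((V j).map (MvPolynomial.eval y))ᵀ) →
    ∃ (m : ℕ) (U : Fin m → Matrix (Fin k) (Fin k) (MvPolynomial (Fin d) ℝ)),
    (∀ j a b, ((U j) a b).totalDegree ≤ ℓ) ∧
    ∀ x : Fin d → ℝ, (∑ i, x i ^ 2) = 1 →
      G.map (MvPolynomial.eval x)
        = ∑ j, (U j).map (MvPolynomial.eval x) * ((U j).map (MvPolynomial.eval x))ᵀ := by
  classical
  set sq : MvPolynomial (Fin d) ℝ := ∑ i, X i ^ 2 with hsq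
  have hsqhom : sq.IsHomogeneous 2 :=
    IsHomogeneous.sum _ _ _ fun i _ => by simpa using (isHomogeneous_X ℝ i).pow 2
  have hsqeval : ∀ y : Fin d → ℝ, eval y sq = ∑ i, y i ^ 2 := fun y => by simp [hsq]
  rintro ⟨m, V, hV⟩
  have hV' : ∀ (y : Fin d → ℝ) (a c : Fin k),
      (∑ i, y i ^ 2) ^ (ℓ - n) * eval y (G a c)
        = ∑ j, ∑ b, eval y (V j a b) * eval y (V j c b) := by
    intro y a c
    have h := Matrix.ext_iff.mpr (hV y) a c
    simpa [Matrix.sum_apply, Matrix.mul_apply, Matrix.smul_apply, Matrix.map_apply,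
      smul_eq_mul] using h
  have hpoly : ∀ a c : Fin k, sq ^ (ℓ - n) * G a c = ∑ j, ∑ b, V j a b * V j c b := by
    intro a c
    apply MvPolynomial.funext
    intro y
    have h := hV' y a c
    simpa [map_sum, _root_.map_mul, map_pow, hsqeval] using h
  have hdeg : ∀ j a b, (V j a b).totalDegree ≤ ℓ := by
    by_contra hcon
    push_neg at hcon
    obtain ⟨j0, a0, b0, hj0⟩ := hcon
    set D : ℕ := Finset.sup Finset.univ
      (fun t : Fin m × Fin k × Fin k => (V t.1 t.2.1 t.2.2).totalDegree) with hD
    have hDge : ∀ j a b, (V j a b).totalDegree ≤ D := fun j a b =>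
      Finset.le_sup (f := fun t : Fin m × Fin k × Fin k => (V t.1 t.2.1 t.2.2).totalDegree)
        (mem_univ (j, a, b))
    have hDgt : ℓ < D := lt_of_lt_of_le hj0 (hDge j0 a0 b0)
    have hDpos : 0 < D := lt_of_le_of_lt (Nat.zero_le ℓ) hDgt
    have htr : sq ^ (ℓ - n) * (∑ a, G a a)
        = ∑ t : Fin m × Fin k × Fin k, (V t.1 t.2.1 t.2.2) ^ 2 := by
      rw [Finset.mul_sum]
      calc ∑ a, sq ^ (ℓ - n) * G a a
          = ∑ a, ∑ j, ∑ b, V j a b * V j a b := Finset.sum_congr rfl fun a _ => hpoly a a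
        _ = ∑ j, ∑ a, ∑ b, (V j a b) ^ 2 := by
            rw [Finset.sum_comm]
            simp [pow_two]
        _ = ∑ t : Fin m × Fin k × Fin k, (V t.1 t.2.1 t.2.2) ^ 2 := by
            rw [Fintype.sum_prod_type]
            exact Finset.sum_congr rfl fun j _ => by rw [Fintype.sum_prod_type]
    have hzero : (0 : MvPolynomial (Fin d) ℝ)
        = ∑ t : Fin m × Fin k × Fin k, (homogeneousComponent D (V t.1 t.2.1 t.2.2)) ^ 2 := by
      have h1 := congrArg (homogeneousComponent (D + D)) htr
      rw [map_sum] at h1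
      have hL : homogeneousComponent (D + D) (sq ^ (ℓ - n) * (∑ a, G a a)) = 0 := by
        apply homogeneousComponent_eq_zero
        have hhom : (sq ^ (ℓ - n) * ∑ a, G a a).IsHomogeneous (2 * (ℓ - n) + 2 * n) :=
          (hsqhom.pow _).mul (IsHomogeneous.sum _ _ _ fun a _ => hGhom a a)
        have := hhom.totalDegree_le
        omega
      rw [hL] at h1
      rw [h1]
      refine Finset.sum_congr rfl fun t _ => ?_
      rw [pow_two, pow_two]
      exact Stmt19Aux.hc_mul_top hDpos (hDge _ _ _) (hDge _ _ _)
    have hall : ∀ t : Fin m × Fin k × Fin k,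
        homogeneousComponent D (V t.1 t.2.1 t.2.2) = 0 :=
      fun t => Stmt19Aux.eq_zero_of_sum_sq _ hzero.symm t
    obtain ⟨t0, -, ht0⟩ := Finset.exists_mem_eq_sup Finset.univ ⟨(j0, a0, b0), mem_univ _⟩
      (fun t : Fin m × Fin k × Fin k => (V t.1 t.2.1 t.2.2).totalDegree)
    have hDt0 : D = (V t0.1 t0.2.1 t0.2.2).totalDegree := ht0
    have hne : V t0.1 t0.2.1 t0.2.2 ≠ 0 := by
      intro h0
      rw [h0] at hDt0
      simp at hDt0
      omega
    have := Stmt19Aux.hc_totalDegree_ne_zero hne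
    rw [← hDt0] at this
    exact this (hall t0)
  refine ⟨m, V, hdeg, fun x hx => ?_⟩
  have h := hV x
  rw [hx] at h
  simpa using h

end Stmt19Main


/-- A `k × k` symmetric-matrix-valued polynomial `F` in `d` real variables is `ℓ`-sos on the
unit sphere `S^{d-1}` if there exist finitely many `k × k` matrix-valued polynomials `U_j`
with entries of degree at most `ℓ` such that `F(x) = ∑_j U_j(x) U_j(x)ᵀ` for every `x` with
`∑ i, x i ^ 2 = 1`. -/
def IsMatrixSosOnSphere (d k ℓ : ℕ)
    (F : Matrix (Fin k) (Fin k) (MvPolynomial (Fin d) ℝ)) : Prop :=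
  ∃ (m : ℕ) (U : Fin m → Matrix (Fin k) (Fin k) (MvPolynomial (Fin d) ℝ)),
    (∀ j a b, ((U j) a b).totalDegree ≤ ℓ) ∧
    ∀ x : Fin d → ℝ, (∑ i, x i ^ 2) = 1 →
      F.map (MvPolynomial.eval x)
        = ∑ j, (U j).map (MvPolynomial.eval x) * ((U j).map (MvPolynomial.eval x))ᵀ

/-- a symmetric matrix-valued homogeneous polynomial `G` of degree `2n` is
`ℓ`-sos on `S^{d-1}` (for `ℓ ≥ n`) if and only if `‖y‖^{2(ℓ-n)}·G(y)` is a sum of squares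
`∑_j V_j(y) V_j(y)ᵀ` of matrix polynomials on all of `ℝ^d`. -/
theorem stmt_19 (d k n ℓ : ℕ) (hd : 0 < d) (hk : 0 < k) (hℓ : n ≤ ℓ)
    (G : Matrix (Fin k) (Fin k) (MvPolynomial (Fin d) ℝ))
    (hGhom : ∀ a b, (G a b).IsHomogeneous (2 * n)) (hGsym : Gᵀ = G) :
    IsMatrixSosOnSphere d k ℓ G ↔
    ∃ (m : ℕ) (V : Fin m → Matrix (Fin k) (Fin k) (MvPolynomial (Fin d) ℝ)),
      ∀ y : Fin d → ℝ,
        ((∑ i, y i ^ 2) ^ (ℓ - n)) • (G.map (MvPolynomial.eval y))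
          = ∑ j, (V j).map (MvPolynomial.eval y) * ((V j).map (MvPolynomial.eval y))ᵀ := by
  constructor
  · exact fun h => stmt19_forward hd hk hℓ G hGhom hGsym h
  · exact fun h => stmt19_backward hd hk hℓ G hGhom h
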